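/- Let f : ℝ^N → ℝ be Lebesgue integrable and let 𝓡 be a collection of closed N-dimensional intervals (boxes) with sides parallel to the axes, each centered at the origin and with non-empty interior, which is totally ordered by inclusion (for any R_i, R_j ∈ 𝓡, either R_i ⊆ R_j or R_j ⊆ R_i). Then for Lebesgue-almost every x ∈ ℝ^N the following holds: for every sequence (R_n) of members of 𝓡 with diam(R_n) → 0, one has (1/vol(R_n)) ∫_{R_n} f(x − y) dy → f(x) as n → ∞. -/

import Mathlib

open MeasureTheory Filter Topology Set

open Metric TopologicalSpace
open scoped NNReal ENNReal Topology Pointwise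

variable {α ι : Type*}


/-- Generalized measurable Vitali covering theorem, with an abstract enlargement `e`
and an abstract size function `δ`. -/
theorem my_exists_disjoint_covering_ae
    [PseudoMetricSpace α] [MeasurableSpace α] [OpensMeasurableSpace α]
    [SecondCountableTopology α] (μ : Measure α) [IsLocallyFiniteMeasure μ] (s : Set α) (t : Set ι)
    (C : ℝ≥0) (r : ι → ℝ) (c : ι → α) (B : ι → Set α) (e : ι → Set α) (δ : ι → ℝ) (M : ℝ)
    (hB : ∀ a ∈ t, B a ⊆ closedBall (c a) (r a))
    (μB : ∀ a ∈ t, μ (e a) ≤ C * μ (B a))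
    (hcomp : ∀ a ∈ t, ∀ b ∈ t, (B a ∩ B b).Nonempty → δ a ≤ 2 * δ b → c a ∈ e b)
    (δnonneg : ∀ a ∈ t, 0 ≤ δ a)
    (hδM : ∀ a ∈ t, r a ≤ 1 → δ a ≤ M)
    (ht : ∀ a ∈ t, (interior (B a)).Nonempty) (h't : ∀ a ∈ t, IsClosed (B a))
    (hf : ∀ x ∈ s, ∀ ε > (0 : ℝ), ∃ a ∈ t, r a ≤ ε ∧ c a = x) :
    ∃ u ⊆ t, u.Countable ∧ u.PairwiseDisjoint B ∧ μ (s \ ⋃ a ∈ u, B a) = 0 := by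
  classical
  -- choose around each `x` a small ball on which the measure is finite
  have : ∀ x, ∃ R, 0 < R ∧ R ≤ 1 ∧ μ (closedBall x (20 * R)) < ∞ := fun x ↦ by
    refine ((eventually_le_nhds one_pos).and ?_).exists_gt
    refine (tendsto_closedBall_smallSets x).comp ?_ (μ.finiteAt_nhds x).eventually
    exact Continuous.tendsto' (by fun_prop) _ _ (mul_zero _)
  choose R hR0 hR1 hRμ using this
  let t' := { a ∈ t | r a ≤ R (c a) }
  -- extract a disjoint subfamily `u` of `t'` thanks to the abstract Vitali covering theorem.
  obtain ⟨u, ut', u_disj, hu⟩ : ∃ u ⊆ t',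
      u.PairwiseDisjoint B ∧ ∀ a ∈ t', ∃ b ∈ u, (B a ∩ B b).Nonempty ∧ δ a ≤ 2 * δ b := by
    have A' : ∀ a ∈ t', (B a).Nonempty :=
      fun a hat' => Set.Nonempty.mono interior_subset (ht a hat'.1)
    refine Vitali.exists_disjoint_subfamily_covering_enlargement B t' δ 2 one_lt_two
      (fun a ha => δnonneg a ha.1) M (fun a ha => hδM a ha.1 (ha.2.trans (hR1 (c a)))) A'
  have ut : u ⊆ t := fun a hau => (ut' hau).1
  have u_count : u.Countable := u_disj.countable_of_nonempty_interior fun a ha => ht a (ut ha)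
  refine ⟨u, fun a hat' => (ut' hat').1, u_count, u_disj, ?_⟩
  refine measure_null_of_locally_null _ fun x _ => ?_
  let v := { a ∈ u | (B a ∩ ball x (R x)).Nonempty }
  have vu : v ⊆ u := fun a ha => ha.1
  obtain ⟨K, μK, hK⟩ : ∃ K, μ (closedBall x K) < ∞ ∧
      ∀ a ∈ u, (B a ∩ ball x (R x)).Nonempty → B a ⊆ closedBall x K := by
    have Idist_v : ∀ a ∈ v, dist (c a) x ≤ r a + R x := by
      intro a hav
      apply dist_le_add_of_nonempty_closedBall_inter_closedBall
      refine hav.2.mono ?_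
      apply inter_subset_inter _ ball_subset_closedBall
      exact hB a (ut (vu hav))
    set R0 := sSup (r '' v) with R0_def
    have R0_bdd : BddAbove (r '' v) := by
      refine ⟨1, fun r' hr' => ?_⟩
      rcases (mem_image _ _ _).1 hr' with ⟨b, hb, rfl⟩
      exact le_trans (ut' (vu hb)).2 (hR1 (c b))
    rcases le_total R0 (R x) with (H | H)
    · refine ⟨20 * R x, hRμ x, fun a au hax => ?_⟩
      refine (hB a (ut au)).trans ?_
      apply closedBall_subset_closedBall'
      have : r a ≤ R0 := le_csSup R0_bdd (mem_image_of_mem _ ⟨au, hax⟩)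
      linarith [Idist_v a ⟨au, hax⟩, hR0 x]
    · have R0pos : 0 < R0 := (hR0 x).trans_le H
      have vnonempty : v.Nonempty := by
        by_contra h
        rw [nonempty_iff_ne_empty, Classical.not_not] at h
        rw [h, image_empty, Real.sSup_empty] at R0_def
        exact lt_irrefl _ (R0pos.trans_le (le_of_eq R0_def))
      obtain ⟨a, hav, R0a⟩ : ∃ a ∈ v, R0 / 2 < r a := by
        obtain ⟨r', r'mem, hr'⟩ : ∃ r' ∈ r '' v, R0 / 2 < r' :=
          exists_lt_of_lt_csSup (vnonempty.image _) (half_lt_self R0pos)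
        rcases (mem_image _ _ _).1 r'mem with ⟨a, hav, rfl⟩
        exact ⟨a, hav, hr'⟩
      refine ⟨8 * R0, ?_, ?_⟩
      · apply lt_of_le_of_lt (measure_mono _) (hRμ (c a))
        apply closedBall_subset_closedBall'
        rw [dist_comm]
        linarith [Idist_v a hav, (ut' (vu hav)).2]
      · intro b bu hbx
        refine (hB b (ut bu)).trans ?_
        apply closedBall_subset_closedBall'
        have : r b ≤ R0 := le_csSup R0_bdd (mem_image_of_mem _ ⟨bu, hbx⟩)
        linarith [Idist_v b ⟨bu, hbx⟩]
  refine ⟨_ ∩ ball x (R x), inter_mem_nhdsWithin _ (ball_mem_nhds _ (hR0 _)),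
    nonpos_iff_eq_zero.mp (le_of_forall_gt_imp_ge_of_dense fun ε εpos => ?_)⟩
  have I : (∑' a : v, μ (B a)) < ∞ := by
    calc
      (∑' a : v, μ (B a)) = μ (⋃ a ∈ v, B a) := by
        rw [measure_biUnion (u_count.mono vu) _ fun a ha => (h't _ (vu.trans ut ha)).measurableSet]
        exact u_disj.subset vu
      _ ≤ μ (closedBall x K) := (measure_mono (iUnion₂_subset fun a ha => hK a (vu ha) ha.2))
      _ < ∞ := μK
  obtain ⟨w, hw⟩ : ∃ w : Finset v, (∑' a : { a // a ∉ w }, μ (B a)) < ε / C :=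
    haveI : 0 < ε / C := by
      simp only [ENNReal.div_pos_iff, εpos.ne', ENNReal.coe_ne_top, Ne, not_false_iff,
        and_self_iff]
    ((tendsto_order.1 (ENNReal.tendsto_tsum_compl_atTop_zero I.ne)).2 _ this).exists
  have M : (s \ ⋃ a ∈ u, B a) ∩
      ball x (R x) ⊆ ⋃ a : { a // a ∉ w }, e a := by
    intro z hz
    set k := ⋃ (a : v) (_ : a ∈ w), B a
    have k_closed : IsClosed k := isClosed_biUnion_finset fun i _ => h't _ (ut (vu i.2))
    have z_notmem_k : z ∉ k := by
      simp only [k, not_exists, exists_prop, mem_iUnion, mem_sep_iff, forall_exists_index,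
        SetCoe.exists, not_and, exists_and_right, Subtype.coe_mk]
      intro b hbv _ h'z
      have : z ∈ (s \ ⋃ a ∈ u, B a) ∩ ⋃ a ∈ u, B a :=
        mem_inter (mem_of_mem_inter_left hz) (mem_biUnion (vu hbv) h'z)
      simpa only [diff_inter_self]
    have : ball x (R x) \ k ∈ 𝓝 z := by
      apply IsOpen.mem_nhds (isOpen_ball.sdiff k_closed) _
      exact (mem_diff _).2 ⟨mem_of_mem_inter_right hz, z_notmem_k⟩
    obtain ⟨d, dpos, hd⟩ : ∃ d, 0 < d ∧ closedBall z d ⊆ ball x (R x) \ k :=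
      nhds_basis_closedBall.mem_iff.1 this
    obtain ⟨a, hat, ad, rfl⟩ : ∃ a ∈ t, r a ≤ min d (R z) ∧ c a = z :=
      hf z ((mem_diff _).1 (mem_of_mem_inter_left hz)).1 (min d (R z)) (lt_min dpos (hR0 z))
    have ax : B a ⊆ ball x (R x) := by
      refine (hB a hat).trans ?_
      refine Subset.trans ?_ (hd.trans Set.diff_subset)
      exact closedBall_subset_closedBall (ad.trans (min_le_left _ _))
    obtain ⟨b, bu, ab, bdiam⟩ : ∃ b ∈ u, (B a ∩ B b).Nonempty ∧ δ a ≤ 2 * δ b :=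
      hu a ⟨hat, ad.trans (min_le_right _ _)⟩
    have bv : b ∈ v := by
      refine ⟨bu, ab.mono ?_⟩
      rw [inter_comm]
      exact inter_subset_inter_right _ ax
    let b' : v := ⟨b, bv⟩
    have b'_notmem_w : b' ∉ w := by
      intro b'w
      have b'k : B b' ⊆ k := @Finset.subset_set_biUnion_of_mem _ _ _ (fun y : v => B y) _ b'w
      have : (ball x (R x) \ k ∩ k).Nonempty := by
        apply ab.mono (inter_subset_inter _ b'k)
        refine ((hB _ hat).trans ?_).trans hd
        exact closedBall_subset_closedBall (ad.trans (min_le_left _ _))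
      simpa only [diff_inter_self, Set.not_nonempty_empty]
    let b'' : { a // a ∉ w } := ⟨b', b'_notmem_w⟩
    have zb : c a ∈ e b := hcomp a hat b (ut bu) ab bdiam
    exact mem_iUnion.2 ⟨b'', zb⟩
  haveI : Countable v := (u_count.mono vu).to_subtype
  calc
    μ ((s \ ⋃ a ∈ u, B a) ∩ ball x (R x)) ≤ μ (⋃ a : { a // a ∉ w }, e a) :=
      measure_mono M
    _ ≤ ∑' a : { a // a ∉ w }, μ (e a) := measure_iUnion_le _
    _ ≤ ∑' a : { a // a ∉ w }, C * μ (B a) := (ENNReal.tsum_le_tsum fun a => μB a (ut (vu a.1.2)))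
    _ = C * ∑' a : { a // a ∉ w }, μ (B a) := ENNReal.tsum_mul_left
    _ ≤ C * (ε / C) := by gcongr
    _ ≤ ε := ENNReal.mul_div_le

variable {N : ℕ}

/-- `c` is the half-width vector of a box of the family `𝓡`. -/
def goodVec (𝓡 : Set (Set (Fin N → ℝ))) (c : Fin N → ℝ) : Prop :=
  (∀ k, 0 < c k) ∧ Icc (-c) c ∈ 𝓡

/-- Boxes of `𝓡` containing the box of `c`, of volume at most twice that of `c`. -/
def boxA (𝓡 : Set (Set (Fin N → ℝ))) (c : Fin N → ℝ) : Set (Fin N → ℝ) :=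
  {d | goodVec 𝓡 d ∧ c ≤ d ∧ (∏ k, d k) ≤ 2 * ∏ k, c k}

/-- Coordinatewise supremum of `boxA 𝓡 c`. -/
noncomputable def boxD (𝓡 : Set (Set (Fin N → ℝ))) (c : Fin N → ℝ) : Fin N → ℝ :=
  fun k => sSup ((fun d => d k) '' boxA 𝓡 c)

section lemmas

variable {𝓡 : Set (Set (Fin N → ℝ))} {c d : Fin N → ℝ}

theorem goodVec.prod_pos (hc : goodVec 𝓡 c) : 0 < ∏ k, c k :=
  Finset.prod_pos fun k _ => hc.1 k

theorem goodVec.mem_boxA (hc : goodVec 𝓡 c) : c ∈ boxA 𝓡 c :=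
  ⟨hc, le_rfl, by nlinarith [hc.prod_pos]⟩

theorem bddAbove_boxA (hc : goodVec 𝓡 c) (k : Fin N) :
    BddAbove ((fun d => d k) '' boxA 𝓡 c) := by
  refine ⟨(2 * ∏ j, c j) / ∏ j ∈ Finset.univ.erase k, c j, ?_⟩
  rintro - ⟨d, hd, rfl⟩
  have hpos : (0:ℝ) < ∏ j ∈ Finset.univ.erase k, c j :=
    Finset.prod_pos fun j _ => hc.1 j
  rw [le_div_iff₀ hpos]
  calc d k * ∏ j ∈ Finset.univ.erase k, c j
      ≤ d k * ∏ j ∈ Finset.univ.erase k, d j := by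
        apply mul_le_mul_of_nonneg_left _ (hd.1.1 k).le
        exact Finset.prod_le_prod (fun j _ => (hc.1 j).le) (fun j _ => hd.2.1 j)
    _ = ∏ j, d j := Finset.mul_prod_erase _ _ (Finset.mem_univ k)
    _ ≤ 2 * ∏ j, c j := hd.2.2

theorem le_boxD (hc : goodVec 𝓡 c) (hd : d ∈ boxA 𝓡 c) : d ≤ boxD 𝓡 c :=
  fun k => le_csSup (bddAbove_boxA hc k) (mem_image_of_mem _ hd)

theorem goodVec.le_boxD_self (hc : goodVec 𝓡 c) : c ≤ boxD 𝓡 c :=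
  le_boxD hc hc.mem_boxA

theorem goodVec.boxD_pos (hc : goodVec 𝓡 c) (k : Fin N) : 0 < boxD 𝓡 c k :=
  (hc.1 k).trans_le (hc.le_boxD_self k)

theorem prod_boxD_le
    (hvchain : ∀ c d, goodVec 𝓡 c → goodVec 𝓡 d → c ≤ d ∨ d ≤ c)
    (hc : goodVec 𝓡 c) : (∏ k, boxD 𝓡 c k) ≤ 2 * ∏ k, c k := by
  by_contra hcon
  push_neg at hcon
  -- find a small `ε > 0` such that `∏ (boxD c k - ε)` still exceeds `2 ∏ c`,
  -- with all factors nonnegative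
  obtain ⟨ε, hε1, hε2, hε0⟩ :
      ∃ ε : ℝ, (2 * ∏ k, c k) < (∏ k, (boxD 𝓡 c k - ε)) ∧ (∀ k, ε ≤ boxD 𝓡 c k) ∧ 0 < ε := by
    have cont : Tendsto (fun ε : ℝ => ∏ k, (boxD 𝓡 c k - ε)) (𝓝 0)
        (𝓝 (∏ k, boxD 𝓡 c k)) := by
      have : Tendsto (fun ε : ℝ => ∏ k, (boxD 𝓡 c k - ε)) (𝓝 0)
          (𝓝 (∏ k, (boxD 𝓡 c k - 0))) :=
        tendsto_finset_prod _ fun k _ => tendsto_const_nhds.sub tendsto_id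
      simpa using this
    have h1 : ∀ᶠ ε : ℝ in 𝓝 0, (2 * ∏ k, c k) < ∏ k, (boxD 𝓡 c k - ε) :=
      cont.eventually (eventually_gt_nhds hcon)
    have h2 : ∀ᶠ ε : ℝ in 𝓝 0, ∀ k, ε ≤ boxD 𝓡 c k :=
      eventually_all.2 fun k => eventually_le_nhds (hc.boxD_pos k)
    have h3 : ∀ᶠ ε : ℝ in 𝓝[>] (0:ℝ), ε ∈ Ioi (0:ℝ) := eventually_mem_nhdsWithin
    obtain ⟨ε, hε, h0⟩ := (((h1.and h2).filter_mono nhdsWithin_le_nhds).and h3).exists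
    exact ⟨ε, hε.1, hε.2, h0⟩
  -- find a member of the chain `boxA` nearly achieving the sup in every coordinate
  have key : ∀ s : Finset (Fin N), ∃ d ∈ boxA 𝓡 c, ∀ k ∈ s, boxD 𝓡 c k - ε ≤ d k := by
    intro s
    induction s using Finset.induction with
    | empty => exact ⟨c, hc.mem_boxA, by simp⟩
    | @insert k s hk ih =>
      obtain ⟨d, hd, hds⟩ := ih
      obtain ⟨y, hy, hky⟩ : ∃ y ∈ (fun d => d k) '' boxA 𝓡 c, boxD 𝓡 c k - ε < y :=
        exists_lt_of_lt_csSup (s := (fun d => d k) '' boxA 𝓡 c)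
          (⟨c k, mem_image_of_mem _ hc.mem_boxA⟩)
          (show boxD 𝓡 c k - ε < sSup ((fun d => d k) '' boxA 𝓡 c) from sub_lt_self _ hε0)
      obtain ⟨d', hd', rfl⟩ := hy
      rcases hvchain d d' hd.1 hd'.1 with h | h
      · refine ⟨d', hd', fun j hj => ?_⟩
        rcases Finset.mem_insert.1 hj with rfl | hj
        · exact hky.le
        · exact (hds j hj).trans (h j)
      · refine ⟨d, hd, fun j hj => ?_⟩
        rcases Finset.mem_insert.1 hj with rfl | hj
        · exact hky.le.trans (h j)
        · exact hds j hj
  obtain ⟨d, hd, hdall⟩ := key Finset.univ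
  have : (∏ k, (boxD 𝓡 c k - ε)) ≤ ∏ k, d k := by
    refine Finset.prod_le_prod (fun k _ => ?_) (fun k _ => hdall k (Finset.mem_univ k))
    linarith [hε2 k]
  linarith [hd.2.2]

end lemmas

section boxes

theorem my_vadd_Icc (x a b : Fin N → ℝ) : x +ᵥ Icc a b = Icc (x + a) (x + b) := by
  ext z
  rw [Set.mem_vadd_set_iff_neg_vadd_mem]
  simp only [vadd_eq_add, mem_Icc, Pi.le_def, Pi.add_apply, Pi.neg_apply]
  constructor
  · rintro ⟨h1, h2⟩; exact ⟨fun k => by linarith [h1 k], fun k => by linarith [h2 k]⟩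
  · rintro ⟨h1, h2⟩; exact ⟨fun k => by linarith [h1 k], fun k => by linarith [h2 k]⟩

variable {𝓡 : Set (Set (Fin N → ℝ))} {c c' x y : Fin N → ℝ}

theorem pos_mem_Icc (hc : ∀ k, 0 < c k) : c ∈ Icc (-c) c :=
  ⟨fun k => by simpa using (neg_nonpos_of_nonneg (hc k).le).trans (hc k).le, le_rfl⟩

theorem vadd_box_subset_closedBall (x : Fin N → ℝ) :
    x +ᵥ Icc (-c) c ⊆ closedBall x ‖c‖ := by
  rw [my_vadd_Icc]
  intro z hz
  rw [mem_closedBall, dist_eq_norm]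
  refine pi_norm_le_iff_of_nonneg (norm_nonneg c) |>.2 fun k => ?_
  have h1 : x k + (-c) k ≤ z k := hz.1 k
  have h2 : z k ≤ x k + c k := hz.2 k
  have : |z k - x k| ≤ c k := abs_le.2 ⟨by simpa using h1, by linarith⟩
  calc ‖(z - x) k‖ = |z k - x k| := rfl
    _ ≤ c k := this
    _ ≤ ‖c k‖ := le_abs_self _
    _ ≤ ‖c‖ := norm_le_pi_norm c k

theorem exists_pos_le (hc : ∀ k, 0 < c k) : ∃ m : ℝ, 0 < m ∧ ∀ k, m ≤ c k := by
  cases isEmpty_or_nonempty (Fin N) with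
  | inl h => exact ⟨1, one_pos, fun k => (h.elim k)⟩
  | inr h =>
    refine ⟨Finset.univ.inf' Finset.univ_nonempty c, ?_,
      fun k => Finset.inf'_le _ (Finset.mem_univ k)⟩
    exact (Finset.lt_inf'_iff _).2 fun k _ => hc k

theorem mem_interior_vadd_box (hc : ∀ k, 0 < c k) (x : Fin N → ℝ) :
    x ∈ interior (x +ᵥ Icc (-c) c) := by
  obtain ⟨m, hm0, hm⟩ := exists_pos_le hc
  rw [my_vadd_Icc]
  refine mem_interior.2 ⟨ball x m, fun z hz => ?_, isOpen_ball, mem_ball_self hm0⟩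
  rw [mem_ball] at hz
  refine ⟨fun k => ?_, fun k => ?_⟩ <;>
  · have hd : dist (z k) (x k) ≤ dist z x := dist_le_pi_dist z x k
    have h2 : |z k - x k| < m := by
      rw [← Real.dist_eq]; exact hd.trans_lt hz
    have h3 := abs_lt.1 h2
    have h4 := hm k
    simp only [Pi.add_apply, Pi.neg_apply]
    linarith [h3.1, h3.2]

theorem volume_vadd_box (x c : Fin N → ℝ) :
    volume (x +ᵥ Icc (-c) c) = ∏ k, ENNReal.ofReal (2 * c k) := by
  rw [measure_vadd, Real.volume_Icc_pi]
  congr 1 with k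
  congr 1
  simp [two_mul]

theorem volume_enlargement_le
    (hvchain : ∀ c d, goodVec 𝓡 c → goodVec 𝓡 d → c ≤ d ∨ d ≤ c)
    (hc : goodVec 𝓡 c) (x y : Fin N → ℝ) :
    volume (y +ᵥ Icc (-(fun k => 3 * boxD 𝓡 c k)) (fun k => 3 * boxD 𝓡 c k))
      ≤ ((2 * 3 ^ N : ℝ≥0) : ℝ≥0∞) * volume (x +ᵥ Icc (-c) c) := by
  rw [volume_vadd_box, volume_vadd_box]
  have hD0 : ∀ k, 0 ≤ boxD 𝓡 c k := fun k => (hc.boxD_pos k).le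
  rw [← ENNReal.ofReal_prod_of_nonneg (fun k _ => by have := hD0 k; positivity),
    ← ENNReal.ofReal_prod_of_nonneg (fun k _ => by have := (hc.1 k).le; positivity)]
  have hC : ((2 * 3 ^ N : ℝ≥0) : ℝ≥0∞) = ENNReal.ofReal ((2 * 3 ^ N : ℝ)) := by
    rw [ENNReal.ofReal_mul (by norm_num), ENNReal.ofReal_pow (by norm_num)]
    norm_num
  rw [hC, ← ENNReal.ofReal_mul (by positivity)]
  apply ENNReal.ofReal_le_ofReal
  have e1 : (∏ k, (2 * (3 * boxD 𝓡 c k))) = 6 ^ N * ∏ k, boxD 𝓡 c k := by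
    have : ∀ k, 2 * (3 * boxD 𝓡 c k) = 6 * boxD 𝓡 c k := fun k => by ring
    simp_rw [this, Finset.prod_mul_distrib, Finset.prod_const, Finset.card_fin]
  have e2 : (∏ k, (2 * c k)) = 2 ^ N * ∏ k, c k := by
    simp_rw [Finset.prod_mul_distrib, Finset.prod_const, Finset.card_fin]
  rw [e1, e2]
  have := prod_boxD_le hvchain hc
  have h2 : (0:ℝ) < 2 ^ N := by positivity
  nlinarith [hc.prod_pos, pow_pos (show (0:ℝ) < 6 by norm_num) N,
    pow_pos (show (0:ℝ) < 3 by norm_num) N,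
    (show (6:ℝ)^N = 3^N * 2^N by rw [← mul_pow]; norm_num)]

theorem mem_enlargement
    (hvchain : ∀ c d, goodVec 𝓡 c → goodVec 𝓡 d → c ≤ d ∨ d ≤ c)
    (hc : goodVec 𝓡 c) (hc' : goodVec 𝓡 c')
    (hint : ((x +ᵥ Icc (-c) c) ∩ (y +ᵥ Icc (-c') c')).Nonempty)
    (hδ : (∏ k, c k) ≤ 2 * ∏ k, c' k) :
    x ∈ y +ᵥ Icc (-(fun k => 3 * boxD 𝓡 c' k)) (fun k => 3 * boxD 𝓡 c' k) := by
  obtain ⟨z, hz1, hz2⟩ := hint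
  rw [my_vadd_Icc] at hz1 hz2 ⊢
  have key : ∀ k, |x k - y k| ≤ c k + c' k := by
    intro k
    have h1 : |z k - x k| ≤ c k := by
      have := hz1.1 k; have := hz1.2 k
      simp only [Pi.add_apply, Pi.neg_apply] at *
      rw [abs_le]; constructor <;> linarith
    have h2 : |z k - y k| ≤ c' k := by
      have := hz2.1 k; have := hz2.2 k
      simp only [Pi.add_apply, Pi.neg_apply] at *
      rw [abs_le]; constructor <;> linarith
    calc |x k - y k| = |(z k - y k) - (z k - x k)| := by ring_nf
      _ ≤ |z k - y k| + |z k - x k| := abs_sub _ _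
      _ ≤ c' k + c k := add_le_add h2 h1
      _ = c k + c' k := by ring
  have hbound : ∀ k, |x k - y k| ≤ 3 * boxD 𝓡 c' k := by
    intro k
    have hD : c' ≤ boxD 𝓡 c' := hc'.le_boxD_self
    rcases hvchain c c' hc hc' with h | h
    · calc |x k - y k| ≤ c k + c' k := key k
        _ ≤ c' k + c' k := by linarith [h k]
        _ ≤ 3 * boxD 𝓡 c' k := by linarith [hD k, (hc'.1 k).le.trans (hD k)]
    · have hmem : c ∈ boxA 𝓡 c' := ⟨hc, h, hδ⟩
      have hcD : c ≤ boxD 𝓡 c' := le_boxD hc' hmem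
      calc |x k - y k| ≤ c k + c' k := key k
        _ ≤ 3 * boxD 𝓡 c' k := by linarith [hD k, hcD k, (hc'.1 k).le.trans (hD k)]
  refine ⟨fun k => ?_, fun k => ?_⟩ <;>
  · have := abs_le.1 (hbound k)
    simp only [Pi.add_apply, Pi.neg_apply]
    linarith [this.1, this.2]

end boxes
variable {N : ℕ}

/-- The Vitali family associated to a chain of centered boxes. -/
noncomputable def boxVitali (𝓡 : Set (Set (Fin N → ℝ)))
    (hvchain : ∀ c d, goodVec 𝓡 c → goodVec 𝓡 d → c ≤ d ∨ d ≤ c)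
    (hsmall : ∀ ε > (0:ℝ), ∃ c : Fin N → ℝ, goodVec 𝓡 c ∧ ‖c‖ ≤ ε) :
    VitaliFamily (volume : Measure (Fin N → ℝ)) where
  setsAt x := {a | ∃ c : Fin N → ℝ, goodVec 𝓡 c ∧ a = x +ᵥ Icc (-c) c}
  measurableSet x a ha := by
    obtain ⟨c, hc, rfl⟩ := ha; rw [my_vadd_Icc]; exact measurableSet_Icc
  nonempty_interior x a ha := by
    obtain ⟨c, hc, rfl⟩ := ha; exact ⟨x, mem_interior_vadd_box hc.1 x⟩
  nontrivial x ε εpos := by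
    obtain ⟨c, hc, hce⟩ := hsmall ε εpos
    exact ⟨x +ᵥ Icc (-c) c, ⟨c, hc, rfl⟩,
      (vadd_box_subset_closedBall x).trans (closedBall_subset_closedBall hce)⟩
  covering := by
    intro s f fsubset ffine
    set t : Set ((Fin N → ℝ) × ((Fin N → ℝ) × Set (Fin N → ℝ))) :=
      {p | goodVec 𝓡 p.2.1 ∧ p.2.2 = p.1 +ᵥ Icc (-p.2.1) p.2.1 ∧ p.2.2 ∈ f p.1 ∧ p.1 ∈ s}
      with ht_def
    have hfine : ∀ x ∈ s, ∀ ε > (0:ℝ), ∃ p ∈ t, ‖p.2.1‖ ≤ ε ∧ p.1 = x := by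
      intro x xs ε εpos
      obtain ⟨a, haf, haε⟩ := ffine x xs ε εpos
      obtain ⟨c, hc, rfl⟩ := fsubset x xs haf
      refine ⟨(x, c, x +ᵥ Icc (-c) c), ⟨hc, rfl, haf, xs⟩, ?_, rfl⟩
      have hxc : x + c ∈ x +ᵥ Icc (-c) c := by
        rw [my_vadd_Icc]
        exact ⟨fun k => by have := (hc.1 k).le; simp only [Pi.add_apply, Pi.neg_apply]; linarith,
          le_rfl⟩
      have := haε hxc
      rw [mem_closedBall, dist_eq_norm, add_sub_cancel_left] at this
      exact this
    obtain ⟨u, ut, u_count, u_disj, hμ⟩ := my_exists_disjoint_covering_ae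
      (volume : Measure (Fin N → ℝ)) s t (2 * 3 ^ N : ℝ≥0)
      (fun p => ‖p.2.1‖) (fun p => p.1) (fun p => p.2.2)
      (fun p => p.1 +ᵥ Icc (-(fun k => 3 * boxD 𝓡 p.2.1 k)) (fun k => 3 * boxD 𝓡 p.2.1 k))
      (fun p => ∏ k, p.2.1 k) 1
      (fun p hp => by
        obtain ⟨h1, h2, h3, h4⟩ := hp
        rw [h2]; exact vadd_box_subset_closedBall p.1)
      (fun p hp => by
        obtain ⟨h1, h2, h3, h4⟩ := hp
        rw [h2]
        exact volume_enlargement_le hvchain h1 p.1 p.1)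
      (fun p hp q hq hint hδ => by
        obtain ⟨h1, h2, h3, h4⟩ := hp
        obtain ⟨g1, g2, g3, g4⟩ := hq
        rw [h2, g2] at hint
        exact mem_enlargement hvchain h1 g1 hint hδ)
      (fun p hp => Finset.prod_nonneg fun k _ => (hp.1.1 k).le)
      (fun p hp hr => by
        refine Finset.prod_le_one (fun k _ => (hp.1.1 k).le) (fun k _ => ?_)
        calc p.2.1 k ≤ ‖p.2.1 k‖ := le_abs_self _
          _ ≤ ‖p.2.1‖ := norm_le_pi_norm _ k
          _ ≤ 1 := hr)
      (fun p hp => by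
        obtain ⟨h1, h2, h3, h4⟩ := hp
        rw [h2]; exact ⟨p.1, mem_interior_vadd_box h1.1 p.1⟩)
      (fun p hp => by
        obtain ⟨h1, h2, h3, h4⟩ := hp
        rw [h2, my_vadd_Icc]; exact isClosed_Icc)
      hfine
    refine ⟨(fun p => (p.1, p.2.2)) '' u, ?_, ?_, ?_, ?_⟩
    · rintro - ⟨q, hq, rfl⟩
      exact (ut hq).2.2.2
    · rintro p ⟨q, hq, rfl⟩ p' ⟨q', hq', rfl⟩ hqq'
      exact u_disj hq hq' (ne_of_apply_ne (fun p => (p.1, p.2.2)) hqq')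
    · rintro - ⟨q, hq, rfl⟩
      exact (ut hq).2.2.1
    · convert hμ using 3
      exact biUnion_image


/-- **Theorem `thmLebesgue`.** Lebesgue differentiation theorem along a
family `𝓡` of closed `N`-dimensional intervals centered at the origin, with nonempty
interior, totally ordered by inclusion: for a Lebesgue integrable `f : ℝ^N → ℝ` and
almost every `x`, for every sequence `(R n)` of members of `𝓡` with `diam (R n) → 0`
one has `(1 / vol (R n)) ∫_{R n} f (x - y) dy → f x`. -/
theorem lebesgue_differentiation_boxes {N : ℕ} (f : (Fin N → ℝ) → ℝ)
    (hf : Integrable f (volume : Measure (Fin N → ℝ)))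
    (𝓡 : Set (Set (Fin N → ℝ)))
    (hbox : ∀ R ∈ 𝓡, ∃ c : Fin N → ℝ, (∀ k, 0 < c k) ∧ R = Icc (-c) c)
    (hchain : ∀ R ∈ 𝓡, ∀ S ∈ 𝓡, R ⊆ S ∨ S ⊆ R) :
    ∀ᵐ x ∂(volume : Measure (Fin N → ℝ)),
      ∀ R : ℕ → Set (Fin N → ℝ), (∀ n, R n ∈ 𝓡) →
        Tendsto (fun n => Metric.diam (R n)) atTop (𝓝 0) →
        Tendsto (fun n => ((volume (R n)).toReal)⁻¹ * ∫ y in R n, f (x - y)) atTop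
          (𝓝 (f x)) := by
  by_cases hsmall : ∀ ε > (0:ℝ), ∃ c : Fin N → ℝ, goodVec 𝓡 c ∧ ‖c‖ ≤ ε
  · -- main case: the family contains arbitrarily small boxes
    have hvchain : ∀ c d, goodVec 𝓡 c → goodVec 𝓡 d → c ≤ d ∨ d ≤ c := by
      intro c d hc hd
      rcases hchain _ hc.2 _ hd.2 with h | h
      · exact Or.inl (h (pos_mem_Icc hc.1)).2
      · exact Or.inr (h (pos_mem_Icc hd.1)).2
    set v := boxVitali 𝓡 hvchain hsmall with hv
    have hloc : LocallyIntegrable f (volume : Measure (Fin N → ℝ)) := hf.locallyIntegrable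
    filter_upwards [v.ae_tendsto_average hloc] with x hx R hR hdiam
    have hRc : ∀ n, ∃ c : Fin N → ℝ, goodVec 𝓡 c ∧ R n = Icc (-c) c := by
      intro n
      obtain ⟨c, hc0, hce⟩ := hbox _ (hR n)
      exact ⟨c, ⟨hc0, hce ▸ hR n⟩, hce⟩
    choose cs hcs hRe using hRc
    have hT : Tendsto (fun n => x +ᵥ R n) atTop (v.filterAt x) := by
      rw [VitaliFamily.tendsto_filterAt_iff]
      constructor
      · exact Eventually.of_forall fun n => ⟨cs n, hcs n, by rw [hRe n]⟩
      · intro ε εpos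
        filter_upwards [hdiam.eventually (eventually_le_nhds εpos)] with n hn
        intro z hz
        rw [hRe n, my_vadd_Icc] at hz
        have h0 : (0 : Fin N → ℝ) ∈ R n := by
          rw [hRe n]
          refine ⟨fun k => ?_, fun k => ?_⟩ <;>
          · simp only [Pi.neg_apply, Pi.zero_apply]
            linarith [(hcs n).1 k]
        have hzx : z - x ∈ R n := by
          rw [hRe n]
          refine ⟨fun k => ?_, fun k => ?_⟩ <;>
          · have h1 := hz.1 k
            have h2 := hz.2 k
            simp only [Pi.add_apply, Pi.neg_apply, Pi.sub_apply] at h1 h2 ⊢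
            linarith
        have hbdd : Bornology.IsBounded (R n) := by
          rw [hRe n]; exact Metric.isBounded_Icc _ _
        have : dist (z - x) 0 ≤ Metric.diam (R n) := Metric.dist_le_diam_of_mem hbdd hzx h0
        rw [Metric.mem_closedBall]
        calc dist z x = dist (z - x) 0 := by rw [dist_eq_norm, dist_eq_norm]; simp
          _ ≤ Metric.diam (R n) := this
          _ ≤ ε := hn
    have hcomp := hx.comp hT
    refine Tendsto.congr (fun n => ?_) hcomp
    -- identify the average with the claimed expression
    have hiff : ∀ y : Fin N → ℝ, x - y ∈ Icc (x + -(cs n)) (x + cs n) ↔ y ∈ Icc (-(cs n)) (cs n) := by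
      intro y
      simp only [mem_Icc, Pi.le_def, Pi.add_apply, Pi.neg_apply, Pi.sub_apply]
      constructor
      · rintro ⟨h1, h2⟩
        exact ⟨fun k => by linarith [h2 k], fun k => by linarith [h1 k]⟩
      · rintro ⟨h1, h2⟩
        exact ⟨fun k => by linarith [h2 k], fun k => by linarith [h1 k]⟩
    have hint : ∫ y in R n, f (x - y) = ∫ y in x +ᵥ R n, f y := by
      rw [hRe n, my_vadd_Icc]
      rw [← integral_indicator measurableSet_Icc, ← integral_indicator measurableSet_Icc]
      have hpt : ∀ y, (Icc (x + -(cs n)) (x + cs n)).indicator f (x - y)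
          = (Icc (-(cs n)) (cs n)).indicator (fun y => f (x - y)) y := by
        intro y
        by_cases hy : y ∈ Icc (-(cs n)) (cs n)
        · rw [Set.indicator_of_mem ((hiff y).2 hy), Set.indicator_of_mem hy]
        · rw [Set.indicator_of_notMem (fun h => hy ((hiff y).1 h)),
            Set.indicator_of_notMem hy]
      calc ∫ y, (Icc (-(cs n)) (cs n)).indicator (fun y => f (x - y)) y
          = ∫ y, (Icc (x + -(cs n)) (x + cs n)).indicator f (x - y) := by
            simp_rw [hpt]
        _ = ∫ y, (Icc (x + -(cs n)) (x + cs n)).indicator f y :=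
            integral_sub_left_eq_self _ volume x
    simp only [Function.comp_apply]
    rw [setAverage_eq, measureReal_def, measure_vadd, hint, smul_eq_mul]
  · -- degenerate case: no small boxes, so no admissible sequence exists
    push_neg at hsmall
    obtain ⟨ε, εpos, hε⟩ := hsmall
    refine Filter.Eventually.of_forall fun x => ?_
    intro R hR hdiam
    exfalso
    have : ∀ n, ε < Metric.diam (R n) := by
      intro n
      obtain ⟨c, hc0, hce⟩ := hbox _ (hR n)
      have hgc : goodVec 𝓡 c := ⟨hc0, hce ▸ hR n⟩
      have hεc : ε < ‖c‖ := hε c hgc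
      have hbdd : Bornology.IsBounded (R n) := by
        rw [hce]; exact Metric.isBounded_Icc _ _
      have hmem : c ∈ R n := by rw [hce]; exact pos_mem_Icc hc0
      have hmem' : (-c : Fin N → ℝ) ∈ R n := by
        rw [hce]
        exact ⟨le_rfl, fun k => by
          simp only [Pi.neg_apply]
          nlinarith [hc0 k]⟩
      have hd : dist c (-c) ≤ Metric.diam (R n) := Metric.dist_le_diam_of_mem hbdd hmem hmem'
      have : ‖c‖ ≤ dist c (-c) := by
        rw [dist_eq_norm, sub_neg_eq_add, ← two_smul ℝ c, norm_smul]
        simp only [Real.norm_ofNat]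
        nlinarith [norm_nonneg c]
      linarith
    obtain ⟨n, hn⟩ := (hdiam.eventually (eventually_le_nhds εpos)).exists
    exact absurd hn (not_le.2 (this n))
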